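/- Medvedev's logic has the disjunction property: if φ ∨ ψ is valid in every Medvedev frame M_k under every Kripke valuation, then either φ is valid in all M_k or ψ is valid in all M_k. -/
import Mathlib


inductive Fml : Type where
  | atom : ℕ → Fml
  | bot  : Fml
  | and  : Fml → Fml → Fml
  | or   : Fml → Fml → Fml
  | imp  : Fml → Fml → Fml
deriving DecidableEq

/-- Intuitionistic negation: ¬φ := φ → ⊥. -/
def Fml.neg (φ : Fml) : Fml := .imp φ .bot

/-- Biconditional. -/
def Fml.iff (φ ψ : Fml) : Fml := .and (.imp φ ψ) (.imp ψ φ)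

/-- Disjunction of a list of formulas (empty disjunction is ⊥). -/
def disj : List Fml → Fml
  | [] => .bot
  | [φ] => φ
  | φ :: l => .or φ (disj l)

/-- Conjunction of a list of formulas (empty conjunction is ¬⊥). -/
def conj : List Fml → Fml
  | [] => Fml.neg .bot
  | [φ] => φ
  | φ :: l => .and φ (conj l)

/-- Substitution, extended homomorphically. -/
def Fml.subst (σ : ℕ → Fml) : Fml → Fml
  | .atom p => σ p
  | .bot => .bot
  | .and φ ψ => .and (φ.subst σ) (ψ.subst σ)
  | .or φ ψ => .or (φ.subst σ) (ψ.subst σ)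
  | .imp φ ψ => .imp (φ.subst σ) (ψ.subst σ)

/-- Hilbert-style provability for intuitionistic logic plus extra axioms `Ax`. -/
inductive Prov (Ax : Fml → Prop) : Fml → Prop where
  | ax {φ} : Ax φ → Prov Ax φ
  | k {φ ψ} : Prov Ax (.imp φ (.imp ψ φ))
  | s {φ ψ χ} : Prov Ax (.imp (.imp φ (.imp ψ χ)) (.imp (.imp φ ψ) (.imp φ χ)))
  | andI {φ ψ} : Prov Ax (.imp φ (.imp ψ (.and φ ψ)))
  | andE₁ {φ ψ} : Prov Ax (.imp (.and φ ψ) φ)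
  | andE₂ {φ ψ} : Prov Ax (.imp (.and φ ψ) ψ)
  | orI₁ {φ ψ} : Prov Ax (.imp φ (.or φ ψ))
  | orI₂ {φ ψ} : Prov Ax (.imp ψ (.or φ ψ))
  | orE {φ ψ χ} : Prov Ax (.imp (.imp φ χ) (.imp (.imp ψ χ) (.imp (.or φ ψ) χ)))
  | exfalso {φ} : Prov Ax (.imp .bot φ)
  | mp {φ ψ} : Prov Ax (.imp φ ψ) → Prov Ax φ → Prov Ax ψ

/-- No extra axioms: pure intuitionistic logic is `Prov NoAx`. -/
def NoAx : Fml → Prop := fun _ => False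

/-- Instances of the weak Kreisel–Putnam axiom schema. -/
def wKPAx : Fml → Prop := fun φ =>
  ∃ a b c : Fml, φ = .imp (.imp a.neg (.or b.neg c.neg))
    (.or (.imp a.neg b.neg) (.imp a.neg c.neg))

/-- Intuitionistic Kripke forcing over a preordered set of worlds. -/
def Force {W : Type} [Preorder W] (V : W → ℕ → Prop) : W → Fml → Prop
  | w, .atom p => V w p
  | _, .bot => False
  | w, .and φ ψ => Force V w φ ∧ Force V w ψ
  | w, .or φ ψ => Force V w φ ∨ Force V w ψ
  | w, .imp φ ψ => ∀ v, w ≤ v → Force V v φ → Force V v ψ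

/-- A valuation is monotone (persistent). -/
def MonoVal {W : Type} [Preorder W] (V : W → ℕ → Prop) : Prop :=
  ∀ ⦃w w'⦄, w ≤ w' → ∀ p, V w p → V w' p

/-- The Medvedev frame `M n`: nonempty subsets of `Fin n` ordered by reverse inclusion. -/
def Med (n : ℕ) : Type := {I : Finset (Fin n) // I.Nonempty}

instance {n : ℕ} : PartialOrder (Med n) where
  le I J := J.1 ⊆ I.1
  le_refl I := Finset.Subset.refl _
  le_trans I J K h h' := Finset.Subset.trans h' h
  le_antisymm I J h h' := Subtype.ext (Finset.Subset.antisymm h' h)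

instance {n : ℕ} : DecidableEq (Med n) := Subtype.instDecidableEq

/-- Validity on the Medvedev frame `M n`. -/
def MedValid (n : ℕ) (φ : Fml) : Prop :=
  ∀ V : Med n → ℕ → Prop, MonoVal V → ∀ w, Force V w φ

/-- Medvedev's logic of finite problems. -/
def ML (φ : Fml) : Prop := ∀ n, MedValid n φ

/-- The singleton world `{i}` of `M n`. -/
def single {n : ℕ} (i : Fin n) : Med n := ⟨{i}, Finset.singleton_nonempty i⟩

/-- Exponentiation on ℕ∞ (anything involving ∞ gives ∞). -/
def epow : ℕ∞ → ℕ∞ → ℕ∞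
  | some a, some b => some (a ^ b)
  | _, _ => ⊤

/-- Kreisel–Putnam rank. -/
def rank : Fml → ℕ∞
  | .imp _ .bot => 1
  | .or φ ψ => rank φ + rank ψ
  | .and φ ψ => rank φ * rank ψ
  | .imp φ ψ => epow (rank ψ) (rank φ)
  | _ => ⊤

/-- Disjunction of `α i` over a finite index set. -/
noncomputable def bigOrOn {n : ℕ} (α : Fin n → Fml) (I : Finset (Fin n)) : Fml :=
  disj (I.toList.map α)

/-- `α_I := ¬¬⋁_{i ∈ I} α_i`. -/
noncomputable def alphaF {n : ℕ} (α : Fin n → Fml) (I : Finset (Fin n)) : Fml :=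
  Fml.neg (Fml.neg (bigOrOn α I))

lemma force_mono {W : Type} [Preorder W] {V : W → ℕ → Prop} (hV : MonoVal V) :
    ∀ (χ : Fml) {w w' : W}, w ≤ w' → Force V w χ → Force V w' χ
  | .atom p, _, _, h, hf => hV h p hf
  | .bot, _, _, _, hf => hf
  | .and a b, _, _, h, hf => ⟨force_mono hV a h hf.1, force_mono hV b h hf.2⟩
  | .or a b, _, _, h, hf =>
      hf.elim (fun x => Or.inl (force_mono hV a h x)) (fun x => Or.inr (force_mono hV b h x))
  | .imp _ _, _, _, h, hf => fun v hv ha => hf v (le_trans h hv) ha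

/-- Embedding of Medvedev frames along an injection of indices. -/
def embM {a c : ℕ} (g : Fin a ↪ Fin c) (I : Med a) : Med c :=
  ⟨I.1.map g, I.2.map⟩

lemma embM_le {a c : ℕ} (g : Fin a ↪ Fin c) {I J : Med a} (h : I ≤ J) :
    embM g I ≤ embM g J := Finset.map_subset_map.mpr h

lemma embM_inj {a c : ℕ} (g : Fin a ↪ Fin c) {I J : Med a}
    (h : embM g I = embM g J) : I = J := by
  apply Subtype.ext
  exact Finset.map_injective g (congrArg Subtype.val h)

lemma le_embM {a c : ℕ} (g : Fin a ↪ Fin c) (I : Med a) (v : Med c) (h : embM g I ≤ v) :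
    ∃ J : Med a, v = embM g J ∧ I ≤ J := by
  have h' : v.1 ⊆ I.1.map g := h
  have hJne : (I.1.filter (fun i => g i ∈ v.1)).Nonempty := by
    obtain ⟨x, hx⟩ := v.2
    obtain ⟨i, hi, rfl⟩ := Finset.mem_map.mp (h' hx)
    exact ⟨i, Finset.mem_filter.mpr ⟨hi, hx⟩⟩
  refine ⟨⟨I.1.filter (fun i => g i ∈ v.1), hJne⟩, ?_, ?_⟩
  · apply Subtype.ext
    ext x
    simp only [embM, Finset.mem_map, Finset.mem_filter]
    constructor
    · intro hx
      obtain ⟨i, hi, rfl⟩ := Finset.mem_map.mp (h' hx)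
      exact ⟨i, ⟨hi, hx⟩, rfl⟩
    · rintro ⟨i, ⟨_, hiv⟩, rfl⟩
      exact hiv
  · intro x hx
    exact (Finset.mem_filter.mp hx).1

lemma force_emb {a c : ℕ} (g : Fin a ↪ Fin c) (V : Med c → ℕ → Prop) (V1 : Med a → ℕ → Prop)
    (hatom : ∀ I p, V (embM g I) p ↔ V1 I p) :
    ∀ (χ : Fml) (I : Med a), Force V (embM g I) χ ↔ Force V1 I χ
  | .atom p, I => hatom I p
  | .bot, _ => Iff.rfl
  | .and x y, I => by
      simpa [Force] using and_congr (force_emb g V V1 hatom x I) (force_emb g V V1 hatom y I)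
  | .or x y, I => by
      simpa [Force] using or_congr (force_emb g V V1 hatom x I) (force_emb g V V1 hatom y I)
  | .imp x y, I => by
      constructor
      · intro hf J hJ hx
        exact (force_emb g V V1 hatom y J).mp
          (hf (embM g J) (embM_le g hJ) ((force_emb g V V1 hatom x J).mpr hx))
      · intro hf v hv hx
        obtain ⟨J, rfl, hIJ⟩ := le_embM g I v hv
        exact (force_emb g V V1 hatom y J).mpr
          (hf J hIJ ((force_emb g V V1 hatom x J).mp hx))

/-- Medvedev's logic has the disjunction property. -/
theorem stmt3 (φ ψ : Fml) (h : ∀ k, MedValid k (.or φ ψ)) :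
    (∀ k, MedValid k φ) ∨ (∀ k, MedValid k ψ) := by
  by_contra hc
  push_neg at hc
  obtain ⟨⟨k1, h1⟩, ⟨k2, h2⟩⟩ := hc
  simp only [MedValid, not_forall] at h1 h2
  obtain ⟨V1, hV1, w1, hw1⟩ := h1
  obtain ⟨V2, hV2, w2, hw2⟩ := h2
  -- embed M k1 and M k2 into M (k1 + k2)
  set gL : Fin k1 ↪ Fin (k1 + k2) :=
    ⟨fun i => Fin.castAdd k2 i, fun i j hij => by
      simpa [Fin.ext_iff] using hij⟩ with hgL
  set gR : Fin k2 ↪ Fin (k1 + k2) :=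
    ⟨fun j => Fin.natAdd k1 j, fun i j hij => by
      simp only [Fin.ext_iff, Fin.natAdd] at hij ⊢; omega⟩ with hgR
  have hLR : ∀ (I : Med k1) (J : Med k2), embM gL I ≠ embM gR J := by
    intro I J hEq
    obtain ⟨j, hj⟩ := J.2
    have : gR j ∈ (embM gL I).1 := by
      rw [hEq]; exact Finset.mem_map_of_mem _ hj
    obtain ⟨i, _, hi⟩ := Finset.mem_map.mp this
    have := congrArg Fin.val hi
    simp only [hgL, hgR, Function.Embedding.coeFn_mk, Fin.castAdd, Fin.natAdd,
      Fin.castLE] at this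
    omega
  -- combined valuation
  set V : Med (k1 + k2) → ℕ → Prop := fun w p =>
    (∃ I, w = embM gL I ∧ V1 I p) ∨ (∃ J, w = embM gR J ∧ V2 J p) with hV
  have hatomL : ∀ I p, V (embM gL I) p ↔ V1 I p := by
    intro I p
    constructor
    · rintro (⟨I', hI', hp⟩ | ⟨J, hJ, _⟩)
      · rwa [embM_inj gL hI']
      · exact absurd hJ (hLR I J)
    · intro hp; exact Or.inl ⟨I, rfl, hp⟩
  have hatomR : ∀ J p, V (embM gR J) p ↔ V2 J p := by
    intro J p
    constructor
    · rintro (⟨I, hI, _⟩ | ⟨J', hJ', hp⟩)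
      · exact absurd hI.symm (hLR I J)
      · rwa [embM_inj gR hJ']
    · intro hp; exact Or.inr ⟨J, rfl, hp⟩
  have hVmono : MonoVal V := by
    rintro w w' hle p (⟨I, rfl, hp⟩ | ⟨J, rfl, hp⟩)
    · obtain ⟨I', rfl, hII'⟩ := le_embM gL I w' hle
      exact Or.inl ⟨I', rfl, hV1 hII' p hp⟩
    · obtain ⟨J', rfl, hJJ'⟩ := le_embM gR J w' hle
      exact Or.inr ⟨J', rfl, hV2 hJJ' p hp⟩
  -- the common world below both embedded counterexample worlds
  have htopne : ((embM gL w1).1 ∪ (embM gR w2).1).Nonempty :=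
    Finset.Nonempty.mono Finset.subset_union_left (embM gL w1).2
  set top : Med (k1 + k2) := ⟨(embM gL w1).1 ∪ (embM gR w2).1, htopne⟩ with htop
  have hforce : Force V top (.or φ ψ) := h (k1 + k2) V hVmono top
  have hle1 : top ≤ embM gL w1 := Finset.subset_union_left
  have hle2 : top ≤ embM gR w2 := Finset.subset_union_right
  rcases hforce with hφ | hψ
  · exact hw1 ((force_emb gL V V1 hatomL φ w1).mp (force_mono hVmono φ hle1 hφ))
  · exact hw2 ((force_emb gR V V2 hatomR ψ w2).mp (force_mono hVmono ψ hle2 hψ))
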